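/- Let B denote the open unit ball {x ∈ ℝ² : ‖x‖₂ < 1}. There exists a map Φ : B → B such that: (i) Φ is a bijection from B onto B; (ii) Φ is continuously differentiable on B; (iii) there exists a continuous map X : B × [0,1] → B with X(ξ,0) = ξ and X(ξ,1) = Φ(ξ) for all ξ ∈ B, such that for every t ∈ [0,1] the map ξ ↦ X(ξ,t) is a continuously differentiable bijection of B onto B (so Φ is isotopic to the identity through diffeomorphisms of the open ball); and (iv) there is no continuous map g : closure(B) → ℝ² with g(ξ) = Φ(ξ) for all ξ ∈ B, i.e. Φ admits no continuous extension to the closed ball. -/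

import Mathlib

open Metric Set Complex Filter

noncomputable def myA (z : ℂ) : ℝ := (1 - ‖z‖ ^ 2)⁻¹
noncomputable def myF (t : ℝ) (z : ℂ) : ℂ := Complex.exp (Complex.I * (t * myA z)) * z


lemma norm_myF (t : ℝ) (z : ℂ) : ‖myF t z‖ = ‖z‖ := by
  simp [myF, Complex.norm_exp]

lemma myA_eq {z w : ℂ} (h : ‖z‖ = ‖w‖) : myA z = myA w := by simp [myA, h]

lemma one_sub_ne {z : ℂ} (hz : z ∈ ball (0:ℂ) 1) : 1 - ‖z‖ ^ 2 ≠ 0 := by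
  rw [mem_ball_zero_iff] at hz
  nlinarith [norm_nonneg z]

lemma myF_contDiffOn (t : ℝ) : ContDiffOn ℝ 1 (myF t) (ball (0:ℂ) 1) := by
  apply ContDiffOn.mul _ contDiffOn_id
  have h1 : ContDiffOn ℝ 1 (fun z : ℂ => (myA z : ℂ)) (ball (0:ℂ) 1) := by
    apply Complex.ofRealCLM.contDiff.comp_contDiffOn
    exact ContDiffOn.inv (contDiffOn_const.sub ((contDiff_norm_sq ℝ).contDiffOn)) fun z hz => one_sub_ne hz
  exact ((Complex.contDiff_exp (𝕜 := ℂ)).restrict_scalars ℝ).comp_contDiffOn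
    (contDiffOn_const.mul (contDiffOn_const.mul h1))

lemma myF_cont : ContinuousOn (fun p : ℂ × ℝ => myF p.2 p.1) (ball (0:ℂ) 1 ×ˢ (univ : Set ℝ)) := by
  apply ContinuousOn.mul _ (continuous_fst.continuousOn)
  apply Complex.continuous_exp.comp_continuousOn
  apply ContinuousOn.mul continuousOn_const
  apply ContinuousOn.mul (Complex.continuous_ofReal.comp continuous_snd).continuousOn
  apply Complex.continuous_ofReal.comp_continuousOn
  apply ContinuousOn.inv₀
  · exact (continuous_const.sub ((continuous_norm.comp continuous_fst).pow 2)).continuousOn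
  · exact fun p hp => one_sub_ne hp.1

lemma myF_bijOn (t : ℝ) : Set.BijOn (myF t) (ball (0:ℂ) 1) (ball (0:ℂ) 1) := by
  refine ⟨fun z hz => ?_, fun z hz w hw h => ?_, fun w hw => ?_⟩
  · rw [mem_ball_zero_iff] at *; rw [norm_myF]; exact hz
  · have hn : ‖z‖ = ‖w‖ := by rw [← norm_myF t z, ← norm_myF t w, h]
    have : myA z = myA w := myA_eq hn
    rw [myF, myF, this] at h
    exact mul_left_cancel₀ (Complex.exp_ne_zero _) h
  · refine ⟨Complex.exp (-(Complex.I * (t * myA w))) * w, ?_, ?_⟩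
    · rw [mem_ball_zero_iff] at *; simpa [Complex.norm_exp] using hw
    · have hn : ‖Complex.exp (-(Complex.I * (t * myA w))) * w‖ = ‖w‖ := by
        simp [Complex.norm_exp]
      rw [myF, myA_eq hn, ← mul_assoc, ← Complex.exp_add]
      simp

lemma myF_zero (z : ℂ) : myF 0 z = z := by simp [myF]


lemma norm_sqrt_lt {b : ℝ} (hb : 1 < b) : ‖((Real.sqrt (1 - b⁻¹) : ℝ) : ℂ)‖ < 1 := by
  rw [Complex.norm_real, Real.norm_eq_abs, _root_.abs_of_nonneg (Real.sqrt_nonneg _)]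
  have h0 : (0:ℝ) < b⁻¹ := inv_pos.mpr (lt_trans one_pos hb)
  rw [Real.sqrt_lt' one_pos]
  linarith

lemma myA_sqrt {b : ℝ} (hb : 1 < b) : myA ((Real.sqrt (1 - b⁻¹) : ℝ) : ℂ) = b := by
  have hbpos : (0:ℝ) < b := lt_trans one_pos hb
  have h1 : (0:ℝ) ≤ 1 - b⁻¹ := by
    have : b⁻¹ ≤ 1 := inv_le_one_of_one_le₀ hb.le
    linarith
  rw [myA, Complex.norm_real, Real.norm_eq_abs, _root_.sq_abs _, Real.sq_sqrt h1]
  simp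

lemma sqrt_tendsto {b : ℕ → ℝ} (hb : Tendsto b atTop atTop) :
    Tendsto (fun n => ((Real.sqrt (1 - (b n)⁻¹) : ℝ) : ℂ)) atTop (nhds 1) := by
  have h1 : Tendsto (fun n => Real.sqrt (1 - (b n)⁻¹)) atTop (nhds 1) := by
    have : Tendsto (fun n => 1 - (b n)⁻¹) atTop (nhds 1) := by
      simpa using tendsto_const_nhds.sub (tendsto_inv_atTop_zero.comp hb)
    simpa [Function.comp_def] using (Real.continuous_sqrt.continuousAt (x := 1)).tendsto.comp this
  simpa [Function.comp_def] using (Complex.continuous_ofReal.continuousAt).tendsto.comp h1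


lemma exp_two_pi (n : ℕ) : Complex.exp (Complex.I * ((2 * Real.pi * (n+1) : ℝ) : ℂ)) = 1 := by
  rw [show Complex.I * ((2 * Real.pi * (n+1) : ℝ) : ℂ) = ((n:ℤ)+1) * (2 * Real.pi * Complex.I) by
    push_cast; ring]
  exact_mod_cast Complex.exp_int_mul_two_pi_mul_I ((n:ℤ)+1)

lemma exp_two_pi' (n : ℕ) :
    Complex.exp (Complex.I * ((2 * Real.pi * (n+1) + Real.pi : ℝ) : ℂ)) = -1 := by
  rw [show Complex.I * ((2 * Real.pi * (n+1) + Real.pi : ℝ) : ℂ) =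
    ((((n:ℤ)+1 : ℤ)) : ℂ) * (2 * Real.pi * Complex.I) + Real.pi * Complex.I by push_cast; ring,
    Complex.exp_add, Complex.exp_pi_mul_I, Complex.exp_int_mul_two_pi_mul_I ((n:ℤ)+1)]
  ring

lemma myF_no_ext : ¬ ∃ g : ℂ → ℂ, ContinuousOn g (closedBall (0:ℂ) 1) ∧
    ∀ z ∈ ball (0:ℂ) 1, g z = myF 1 z := by
  rintro ⟨g, hg, hge⟩
  have hpi := Real.pi_gt_three
  have h1mem : (1:ℂ) ∈ closedBall (0:ℂ) 1 := by simp
  have hcw := (hg 1 h1mem).tendsto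
  -- generic limit fact
  have key : ∀ (b : ℕ → ℝ) (c : ℂ), (∀ n, 1 < b n) → Tendsto b atTop atTop →
      (∀ n, Complex.exp (Complex.I * ((b n : ℝ) : ℂ)) = c) → Tendsto (fun n => g
        ((Real.sqrt (1 - (b n)⁻¹) : ℝ) : ℂ)) atTop (nhds (g 1)) ∧ Tendsto (fun n => g
        ((Real.sqrt (1 - (b n)⁻¹) : ℝ) : ℂ)) atTop (nhds c) := by
    intro b c hb1 hbt hexp
    set u : ℕ → ℂ := fun n => ((Real.sqrt (1 - (b n)⁻¹) : ℝ) : ℂ) with hu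
    have humem : ∀ n, u n ∈ ball (0:ℂ) 1 := fun n => mem_ball_zero_iff.mpr (norm_sqrt_lt (hb1 n))
    have hut : Tendsto u atTop (nhds 1) := sqrt_tendsto hbt
    have hval : ∀ n, g (u n) = c * u n := by
      intro n
      rw [hge _ (humem n), myF, myA_sqrt (hb1 n), Complex.ofReal_one, one_mul, hexp n]
    constructor
    · exact hcw.comp (tendsto_nhdsWithin_of_tendsto_nhds_of_eventually_within u hut
        (Filter.Eventually.of_forall fun n => ball_subset_closedBall (humem n)))
    · have := hut.const_mul c
      rw [mul_one] at this
      exact this.congr (fun n => (hval n).symm)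
  have hnat : Tendsto (fun n : ℕ => ((n:ℝ)+1)) atTop atTop :=
    tendsto_atTop_add_const_right _ 1 tendsto_natCast_atTop_atTop
  have hbt1 : Tendsto (fun n : ℕ => 2 * Real.pi * ((n:ℝ)+1)) atTop atTop :=
    hnat.const_mul_atTop (by positivity)
  have hbt2 : Tendsto (fun n : ℕ => 2 * Real.pi * ((n:ℝ)+1) + Real.pi) atTop atTop :=
    tendsto_atTop_add_const_right _ _ hbt1
  have hb1 : ∀ n : ℕ, 1 < 2 * Real.pi * ((n:ℝ)+1) := by
    intro n
    have h1 : (0:ℝ) ≤ (n:ℝ) := n.cast_nonneg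
    nlinarith
  have hb2 : ∀ n : ℕ, 1 < 2 * Real.pi * ((n:ℝ)+1) + Real.pi := fun n => by
    have := hb1 n; linarith
  obtain ⟨hA, hB⟩ := key _ 1 hb1 hbt1 exp_two_pi
  obtain ⟨hA', hB'⟩ := key _ (-1) hb2 hbt2 exp_two_pi'
  have e1 : g 1 = 1 := tendsto_nhds_unique hA hB
  have e2 : g 1 = -1 := tendsto_nhds_unique hA' hB'
  rw [e1] at e2
  norm_num at e2

noncomputable def myE : ℂ ≃ₗᵢ[ℝ] EuclideanSpace ℝ (Fin 2) :=
  Complex.isometryOfOrthonormal (EuclideanSpace.basisFun (Fin 2) ℝ)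

lemma norm_myE (z : ℂ) : ‖myE z‖ = ‖z‖ := myE.norm_map z
lemma norm_myE_symm (ξ : EuclideanSpace ℝ (Fin 2)) : ‖myE.symm ξ‖ = ‖ξ‖ := myE.symm.norm_map ξ

theorem exists_diffeo_of_open_ball_without_continuous_extension :
    ∃ Φ : EuclideanSpace ℝ (Fin 2) → EuclideanSpace ℝ (Fin 2),
      Set.BijOn Φ (ball (0 : EuclideanSpace ℝ (Fin 2)) 1)
        (ball (0 : EuclideanSpace ℝ (Fin 2)) 1) ∧
      ContDiffOn ℝ 1 Φ (ball (0 : EuclideanSpace ℝ (Fin 2)) 1) ∧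
      (∃ X : EuclideanSpace ℝ (Fin 2) → ℝ → EuclideanSpace ℝ (Fin 2),
        ContinuousOn (fun p : EuclideanSpace ℝ (Fin 2) × ℝ => X p.1 p.2)
          (ball (0 : EuclideanSpace ℝ (Fin 2)) 1 ×ˢ Set.Icc (0:ℝ) 1) ∧
        (∀ ξ ∈ ball (0 : EuclideanSpace ℝ (Fin 2)) 1, ∀ t ∈ Set.Icc (0:ℝ) 1,
          X ξ t ∈ ball (0 : EuclideanSpace ℝ (Fin 2)) 1) ∧
        (∀ ξ ∈ ball (0 : EuclideanSpace ℝ (Fin 2)) 1, X ξ 0 = ξ ∧ X ξ 1 = Φ ξ) ∧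
        (∀ t ∈ Set.Icc (0:ℝ) 1,
          Set.BijOn (fun ξ => X ξ t) (ball (0 : EuclideanSpace ℝ (Fin 2)) 1)
            (ball (0 : EuclideanSpace ℝ (Fin 2)) 1) ∧
          ContDiffOn ℝ 1 (fun ξ => X ξ t) (ball (0 : EuclideanSpace ℝ (Fin 2)) 1))) ∧
      ¬ ∃ g : EuclideanSpace ℝ (Fin 2) → EuclideanSpace ℝ (Fin 2),
          ContinuousOn g (closedBall (0 : EuclideanSpace ℝ (Fin 2)) 1) ∧
          ∀ ξ ∈ ball (0 : EuclideanSpace ℝ (Fin 2)) 1, g ξ = Φ ξ := by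
  set E := EuclideanSpace ℝ (Fin 2)
  set X : E → ℝ → E := fun ξ t => myE (myF t (myE.symm ξ)) with hX
  have hmemE : ∀ ξ : E, ξ ∈ ball (0:E) 1 ↔ myE.symm ξ ∈ ball (0:ℂ) 1 := by
    intro ξ; simp [mem_ball_zero_iff, norm_myE_symm]
  have hbij : ∀ t : ℝ, Set.BijOn (fun ξ => X ξ t) (ball (0:E) 1) (ball (0:E) 1) := by
    intro t
    refine ⟨fun ξ hξ => ?_, fun ξ hξ η hη h => ?_, fun η hη => ?_⟩
    · rw [mem_ball_zero_iff] at *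
      show ‖myE (myF t (myE.symm ξ))‖ < 1
      rw [norm_myE, norm_myF, norm_myE_symm]; exact hξ
    · have h2 : myF t (myE.symm ξ) = myF t (myE.symm η) := myE.injective h
      exact myE.symm.injective ((myF_bijOn t).injOn ((hmemE ξ).1 hξ) ((hmemE η).1 hη) h2)
    · obtain ⟨z, hz, hz2⟩ := (myF_bijOn t).surjOn ((hmemE η).1 hη)
      refine ⟨myE z, ?_, ?_⟩
      · rw [mem_ball_zero_iff] at *; rw [norm_myE]; exact hz
      · show myE (myF t (myE.symm (myE z))) = η
        rw [myE.symm_apply_apply, hz2, myE.apply_symm_apply]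
  have hcd : ∀ t : ℝ, ContDiffOn ℝ 1 (fun ξ => X ξ t) (ball (0:E) 1) := by
    intro t
    exact myE.contDiff.comp_contDiffOn ((myF_contDiffOn t).comp
      (myE.symm.contDiff.contDiffOn) (fun ξ hξ => (hmemE ξ).1 hξ))
  refine ⟨fun ξ => X ξ 1, hbij 1, hcd 1, ⟨X, ?_, ?_, ?_, fun t _ => ⟨hbij t, hcd t⟩⟩, ?_⟩
  · have heq : (fun p : E × ℝ => X p.1 p.2) =
        (myE ∘ (fun q : ℂ × ℝ => myF q.2 q.1)) ∘ (fun p : E × ℝ => (myE.symm p.1, p.2)) := rfl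
    rw [heq]
    apply ContinuousOn.comp (myE.continuous.comp_continuousOn myF_cont)
    · exact ((myE.symm.continuous.comp continuous_fst).prodMk continuous_snd).continuousOn
    · exact fun p hp => ⟨(hmemE p.1).1 hp.1, trivial⟩
  · exact fun ξ hξ t _ => (hbij t).mapsTo hξ
  · intro ξ hξ
    constructor
    · show myE (myF 0 (myE.symm ξ)) = ξ
      rw [myF_zero, myE.apply_symm_apply]
    · rfl
  · rintro ⟨g, hg, hge⟩
    apply myF_no_ext
    refine ⟨fun z => myE.symm (g (myE z)), ?_, ?_⟩
    · apply myE.symm.continuous.comp_continuousOn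
      apply hg.comp myE.continuous.continuousOn
      intro z hz
      rw [mem_closedBall_zero_iff] at *; rw [norm_myE]; exact hz
    · intro z hz
      have hmem : myE z ∈ ball (0:E) 1 := by
        rw [mem_ball_zero_iff] at *; rw [norm_myE]; exact hz
      show myE.symm (g (myE z)) = myF 1 z
      rw [hge _ hmem]
      show myE.symm (myE (myF 1 (myE.symm (myE z)))) = myF 1 z
      rw [myE.symm_apply_apply, myE.symm_apply_apply]
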